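/- Let $(\varepsilon_{gi})$ be random variables grouped in clusters $g \in [G]$ with index sets $I_g$, independent across clusters, with uniformly bounded conditional fourth moments: $\mathbb{E}[\varepsilon_{gi}^4] \le C_4$ for all $g, i$. Let $(w_{gi})$ be deterministic weights. Define $T = \sum_{g \in [G]} \sum_{i,j \in I_g} w_{gi} w_{gj} (\varepsilon_{gi}\varepsilon_{gj} - \mathbb{E}[\varepsilon_{gi}\varepsilon_{gj}])$. Then $\mathbb{E}[T] = 0$ and $\operatorname{Var}(T) \le C \cdot \Big(\max_{g \in [G]} \sum_{i,j \in I_g} |w_{gi} w_{gj}|\Big) \cdot \Big(\sum_{g \in [G]} \sum_{i,j \in I_g} |w_{gi} w_{gj}|\Big)$ for a constant $C$ depending only on $C_4$. -/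

import Mathlib

open MeasureTheory ProbabilityTheory Finset

/-- Variance bound for the centered quadratic form of clustered residuals (step (C.2)
of the proof of Theorem 3): `T` has mean zero and variance bounded by a constant
depending only on the fourth-moment bound times the product of the maximal
within-cluster absolute weight sum and the total absolute weight sum. -/
theorem stmt_14 {Ω : Type*} [MeasurableSpace Ω] (P : Measure Ω) [IsProbabilityMeasure P]
    (G : ℕ) (hG : 0 < G) {I : Fin G → Type*} [∀ g, Fintype (I g)]
    (ε : (g : Fin G) → I g → Ω → ℝ)
    (hmeas : ∀ g i, Measurable (ε g i))
    (hind : iIndepFun (m := fun g => (inferInstance : MeasurableSpace (I g → ℝ)))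
      (fun g ω i => ε g i ω) P)
    (C4 : ℝ)
    (hint4 : ∀ g i, Integrable (fun ω => ε g i ω ^ 4) P)
    (h4 : ∀ g i, ∫ ω, ε g i ω ^ 4 ∂P ≤ C4)
    (w : (g : Fin G) → I g → ℝ) (T : Ω → ℝ)
    (hT : ∀ ω, T ω = ∑ g, ∑ i, ∑ j, w g i * w g j *
      (ε g i ω * ε g j ω - ∫ ω', ε g i ω' * ε g j ω' ∂P)) :
    ∫ ω, T ω ∂P = 0 ∧
      variance T P ≤
        C4 * (Finset.univ.sup' ⟨⟨0, hG⟩, Finset.mem_univ _⟩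
            (fun g => ∑ i, ∑ j, |w g i * w g j|)) *
          (∑ g, ∑ i, ∑ j, |w g i * w g j|) := by
  classical
  set M : ℝ := Finset.univ.sup' ⟨⟨0, hG⟩, Finset.mem_univ _⟩
      (fun g => ∑ i, ∑ j, |w g i * w g j|) with hMdef
  set μ2 : (g : Fin G) → I g → I g → ℝ := fun g i j => ∫ ω', ε g i ω' * ε g j ω' ∂P with hμ2def
  set X : (g : Fin G) → I g → I g → Ω → ℝ := fun g i j ω => ε g i ω * ε g j ω - μ2 g i j
    with hXdef
  set c : (g : Fin G) → I g × I g → ℝ := fun g p => w g p.1 * w g p.2 with hcdef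
  set S : Fin G → Ω → ℝ := fun g ω => ∑ p : I g × I g, c g p * X g p.1 p.2 ω with hSdef
  set A : Fin G → ℝ := fun g => ∑ p : I g × I g, |c g p| with hAdef
  have key2 : ∀ g (i : I g), (0:ℝ) ≤ ∫ ω, ε g i ω ^ 4 ∂P := fun g i =>
    integral_nonneg fun ω => by positivity
  have hεmeas : ∀ g (i j : I g), Measurable fun ω => ε g i ω * ε g j ω := fun g i j =>
    (hmeas g i).mul (hmeas g j)
  have hsq2 : ∀ g (i : I g), MemLp (fun ω => ε g i ω ^ 2) 2 P := by
    intro g i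
    rw [memLp_two_iff_integrable_sq ((hmeas g i).pow_const 2).aestronglyMeasurable]
    have h : (fun ω => (ε g i ω ^ 2) ^ 2) = fun ω => ε g i ω ^ 4 := by funext ω; ring
    rw [h]; exact hint4 g i
  have hprodsq_int : ∀ g (i j : I g), Integrable (fun ω => ε g i ω ^ 2 * ε g j ω ^ 2) P := by
    intro g i j
    have h := MemLp.smul (μ := P) (hsq2 g j) (hsq2 g i) (p := 2) (q := 2) (r := 1)
    rw [memLp_one_iff_integrable] at h
    exact h
  have hprod2 : ∀ g (i j : I g), MemLp (fun ω => ε g i ω * ε g j ω) 2 P := by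
    intro g i j
    rw [memLp_two_iff_integrable_sq (hεmeas g i j).aestronglyMeasurable]
    have h : (fun ω => (ε g i ω * ε g j ω) ^ 2) = fun ω => ε g i ω ^ 2 * ε g j ω ^ 2 := by
      funext ω; ring
    rw [h]; exact hprodsq_int g i j
  have hprodint : ∀ g (i j : I g), Integrable (fun ω => ε g i ω * ε g j ω) P := fun g i j =>
    (hprod2 g i j).integrable one_le_two
  have hX2 : ∀ g (i j : I g), MemLp (X g i j) 2 P := fun g i j =>
    (hprod2 g i j).sub (memLp_const _)
  have hXint : ∀ g (i j : I g), Integrable (X g i j) P := fun g i j =>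
    (hX2 g i j).integrable one_le_two
  have hXmean : ∀ g (i j : I g), ∫ ω, X g i j ω ∂P = 0 := by
    intro g i j
    simp only [hXdef]
    rw [integral_sub (hprodint g i j) (integrable_const _), integral_const]
    simp [hμ2def, measure_univ]
  have hXX_int : ∀ g (i j k l : I g), Integrable (fun ω => X g i j ω * X g k l ω) P := by
    intro g i j k l
    have h := MemLp.smul (μ := P) (hX2 g k l) (hX2 g i j) (p := 2) (q := 2) (r := 1)
    rw [memLp_one_iff_integrable] at h
    exact h
  -- second moment of the product bounded by C4
  have hY2_le : ∀ g (i j : I g), ∫ ω, (ε g i ω * ε g j ω) ^ 2 ∂P ≤ C4 := by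
    intro g i j
    have hC4nn : (0:ℝ) ≤ C4 := le_trans (key2 g i) (h4 g i)
    have heq : (fun ω => (ε g i ω * ε g j ω) ^ 2) = fun ω => ε g i ω ^ 2 * ε g j ω ^ 2 := by
      funext ω; ring
    rw [heq]
    have hhold : ∫ ω, ε g i ω ^ 2 * ε g j ω ^ 2 ∂P ≤
        (∫ ω, (ε g i ω ^ 2) ^ (2:ℝ) ∂P) ^ (1/(2:ℝ)) *
          (∫ ω, (ε g j ω ^ 2) ^ (2:ℝ) ∂P) ^ (1/(2:ℝ)) := by
      refine integral_mul_le_Lp_mul_Lq_of_nonneg ⟨by norm_num, by norm_num, by norm_num⟩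
        (Filter.Eventually.of_forall fun ω => sq_nonneg _)
        (Filter.Eventually.of_forall fun ω => sq_nonneg _) ?_ ?_
      · rw [show ENNReal.ofReal (2:ℝ) = 2 by norm_num]; exact hsq2 g i
      · rw [show ENNReal.ofReal (2:ℝ) = 2 by norm_num]; exact hsq2 g j
    have hre : ∀ (k : I g), (∫ ω, (ε g k ω ^ 2) ^ (2:ℝ) ∂P) = ∫ ω, ε g k ω ^ 4 ∂P := by
      intro k; congr 1; funext ω
      rw [show ((2:ℝ)) = ((2:ℕ):ℝ) by norm_num, Real.rpow_natCast]; ring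
    rw [hre i, hre j, ← Real.sqrt_eq_rpow, ← Real.sqrt_eq_rpow] at hhold
    refine hhold.trans ?_
    calc Real.sqrt (∫ ω, ε g i ω ^ 4 ∂P) * Real.sqrt (∫ ω, ε g j ω ^ 4 ∂P)
        ≤ Real.sqrt C4 * Real.sqrt C4 :=
          mul_le_mul (Real.sqrt_le_sqrt (h4 g i)) (Real.sqrt_le_sqrt (h4 g j))
            (Real.sqrt_nonneg _) (Real.sqrt_nonneg _)
      _ = C4 := Real.mul_self_sqrt hC4nn
  have hXsq_le : ∀ g (i j : I g), ∫ ω, X g i j ω ^ 2 ∂P ≤ C4 := by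
    intro g i j
    have hY2int : Integrable (fun ω => (ε g i ω * ε g j ω) ^ 2) P :=
      (hprod2 g i j).integrable_sq
    have hid : (fun ω => X g i j ω ^ 2) =
        fun ω => ((ε g i ω * ε g j ω) ^ 2 - (2 * μ2 g i j) * (ε g i ω * ε g j ω))
          + μ2 g i j ^ 2 := by
      funext ω; simp only [hXdef]; ring
    have hintsub : Integrable
        (fun ω => (ε g i ω * ε g j ω) ^ 2 - (2 * μ2 g i j) * (ε g i ω * ε g j ω)) P :=
      hY2int.sub ((hprodint g i j).const_mul _)
    rw [hid, integral_add hintsub (integrable_const _),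
      integral_sub hY2int ((hprodint g i j).const_mul _), integral_const_mul, integral_const]
    have hμeq : ∫ ω, ε g i ω * ε g j ω ∂P = μ2 g i j := rfl
    rw [hμeq]
    simp only [measure_univ, probReal_univ, ENNReal.toReal_one, smul_eq_mul, one_mul]
    have h1 := hY2_le g i j
    nlinarith [sq_nonneg (μ2 g i j)]
  have hXsq_nn : ∀ g (i j : I g), (0:ℝ) ≤ ∫ ω, X g i j ω ^ 2 ∂P := fun g i j =>
    integral_nonneg fun ω => sq_nonneg _
  -- covariance bound via Cauchy–Schwarz
  have hcov : ∀ g (i j k l : I g), |∫ ω, X g i j ω * X g k l ω ∂P| ≤ C4 := by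
    intro g i j k l
    have hC4nn : (0:ℝ) ≤ C4 := le_trans (key2 g i) (h4 g i)
    have h1 : |∫ ω, X g i j ω * X g k l ω ∂P| ≤ ∫ ω, |X g i j ω| * |X g k l ω| ∂P := by
      calc |∫ ω, X g i j ω * X g k l ω ∂P| = ‖∫ ω, X g i j ω * X g k l ω ∂P‖ :=
            (Real.norm_eq_abs _).symm
        _ ≤ ∫ ω, ‖X g i j ω * X g k l ω‖ ∂P := norm_integral_le_integral_norm _
        _ = ∫ ω, |X g i j ω| * |X g k l ω| ∂P := by
            simp only [Real.norm_eq_abs, abs_mul]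
    have habs2 : ∀ (a b : I g), MemLp (fun ω => |X g a b ω|) 2 P := fun a b => (hX2 g a b).abs
    have hhold : ∫ ω, |X g i j ω| * |X g k l ω| ∂P ≤
        (∫ ω, |X g i j ω| ^ (2:ℝ) ∂P) ^ (1/(2:ℝ)) *
          (∫ ω, |X g k l ω| ^ (2:ℝ) ∂P) ^ (1/(2:ℝ)) := by
      refine integral_mul_le_Lp_mul_Lq_of_nonneg ⟨by norm_num, by norm_num, by norm_num⟩
        (Filter.Eventually.of_forall fun ω => abs_nonneg _)
        (Filter.Eventually.of_forall fun ω => abs_nonneg _) ?_ ?_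
      · rw [show ENNReal.ofReal (2:ℝ) = 2 by norm_num]; exact habs2 i j
      · rw [show ENNReal.ofReal (2:ℝ) = 2 by norm_num]; exact habs2 k l
    have hre : ∀ (a b : I g), ∫ ω, |X g a b ω| ^ (2:ℝ) ∂P = ∫ ω, X g a b ω ^ 2 ∂P := by
      intro a b; congr 1; funext ω
      rw [show ((2:ℝ)) = ((2:ℕ):ℝ) by norm_num, Real.rpow_natCast, sq_abs]
    rw [hre i j, hre k l, ← Real.sqrt_eq_rpow, ← Real.sqrt_eq_rpow] at hhold
    refine h1.trans (hhold.trans ?_)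
    calc Real.sqrt (∫ ω, X g i j ω ^ 2 ∂P) * Real.sqrt (∫ ω, X g k l ω ^ 2 ∂P)
        ≤ Real.sqrt C4 * Real.sqrt C4 :=
          mul_le_mul (Real.sqrt_le_sqrt (hXsq_le g i j)) (Real.sqrt_le_sqrt (hXsq_le g k l))
            (Real.sqrt_nonneg _) (Real.sqrt_nonneg _)
      _ = C4 := Real.mul_self_sqrt hC4nn
  -- per-cluster facts
  have hS2 : ∀ g, MemLp (S g) 2 P := by
    intro g
    simp only [hSdef]
    exact memLp_finset_sum _ fun p _ => (hX2 g p.1 p.2).const_mul _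
  have hSmean : ∀ g, ∫ ω, S g ω ∂P = 0 := by
    intro g
    simp only [hSdef]
    rw [integral_finset_sum _ fun p _ => (hXint g p.1 p.2).const_mul _]
    simp [integral_const_mul, hXmean]
  have hSvar : ∀ g, variance (S g) P ≤ C4 * M * A g := by
    intro g
    rcases isEmpty_or_nonempty (I g) with hI | hI
    · have hS0 : S g = fun _ => (0:ℝ) := by
        funext ω; simp only [hSdef]
        rw [Finset.univ_eq_empty, Finset.sum_empty]
      have hA0 : A g = 0 := by
        simp only [hAdef]
        rw [Finset.univ_eq_empty, Finset.sum_empty]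
      rw [hS0, hA0, mul_zero]
      have h0 : variance (fun _ : Ω => (0:ℝ)) P = 0 := variance_zero P
      rw [h0]
    · obtain ⟨i0⟩ := hI
      have hC4nn : (0:ℝ) ≤ C4 := le_trans (key2 g i0) (h4 g i0)
      have hAnn : (0:ℝ) ≤ A g := Finset.sum_nonneg fun p _ => abs_nonneg _
      have hAM : A g ≤ M := by
        have h : A g = ∑ i, ∑ j, |w g i * w g j| := by
          simp only [hAdef, hcdef]
          exact Fintype.sum_prod_type (f := fun p : I g × I g => |w g p.1 * w g p.2|)
        rw [h, hMdef]
        exact Finset.le_sup' (fun g => ∑ i, ∑ j, |w g i * w g j|) (Finset.mem_univ g)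
      have hvar : variance (S g) P = ∫ ω, S g ω ^ 2 ∂P := by
        rw [variance_eq_sub (hS2 g)]
        have h0 : (∫ ω, S g ω ∂P) = 0 := hSmean g
        simp only [Pi.pow_apply]
        rw [show P[S g] = ∫ ω, S g ω ∂P from rfl, h0]
        simp
      have hexp : ∫ ω, S g ω ^ 2 ∂P = ∑ p : I g × I g, ∑ q : I g × I g,
          (c g p * c g q) * ∫ ω, X g p.1 p.2 ω * X g q.1 q.2 ω ∂P := by
        have hid : (fun ω => S g ω ^ 2) = fun ω => ∑ p : I g × I g, ∑ q : I g × I g,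
            (c g p * c g q) * (X g p.1 p.2 ω * X g q.1 q.2 ω) := by
          funext ω; simp only [hSdef]
          rw [sq, Finset.sum_mul_sum]
          exact Finset.sum_congr rfl fun p _ => Finset.sum_congr rfl fun q _ => by ring
        calc ∫ ω, S g ω ^ 2 ∂P
            = ∫ ω, ∑ p : I g × I g, ∑ q : I g × I g,
                (c g p * c g q) * (X g p.1 p.2 ω * X g q.1 q.2 ω) ∂P := by rw [hid]
          _ = ∑ p : I g × I g, ∑ q : I g × I g,
                (c g p * c g q) * ∫ ω, X g p.1 p.2 ω * X g q.1 q.2 ω ∂P := by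
              rw [integral_finset_sum _ fun p _ => integrable_finset_sum _ fun q _ =>
                (hXX_int g p.1 p.2 q.1 q.2).const_mul _]
              refine Finset.sum_congr rfl fun p _ => ?_
              rw [integral_finset_sum _ fun q _ => (hXX_int g p.1 p.2 q.1 q.2).const_mul _]
              exact Finset.sum_congr rfl fun q _ => integral_const_mul _ _
      have hbound : ∑ p : I g × I g, ∑ q : I g × I g,
          (c g p * c g q) * ∫ ω, X g p.1 p.2 ω * X g q.1 q.2 ω ∂P ≤ C4 * (A g * A g) := by
        have hterm : ∀ p q : I g × I g,
            (c g p * c g q) * ∫ ω, X g p.1 p.2 ω * X g q.1 q.2 ω ∂P ≤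
              (|c g p| * |c g q|) * C4 := by
          intro p q
          calc (c g p * c g q) * ∫ ω, X g p.1 p.2 ω * X g q.1 q.2 ω ∂P
              ≤ |(c g p * c g q) * ∫ ω, X g p.1 p.2 ω * X g q.1 q.2 ω ∂P| := le_abs_self _
            _ = (|c g p| * |c g q|) * |∫ ω, X g p.1 p.2 ω * X g q.1 q.2 ω ∂P| := by
                rw [abs_mul, abs_mul]
            _ ≤ (|c g p| * |c g q|) * C4 :=
                mul_le_mul_of_nonneg_left (hcov g p.1 p.2 q.1 q.2)
                  (mul_nonneg (abs_nonneg _) (abs_nonneg _))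
        calc ∑ p : I g × I g, ∑ q : I g × I g,
              (c g p * c g q) * ∫ ω, X g p.1 p.2 ω * X g q.1 q.2 ω ∂P
            ≤ ∑ p : I g × I g, ∑ q : I g × I g, (|c g p| * |c g q|) * C4 :=
              Finset.sum_le_sum fun p _ => Finset.sum_le_sum fun q _ => hterm p q
          _ = C4 * (A g * A g) := by
              simp only [hAdef]
              rw [Finset.sum_mul_sum]
              rw [Finset.mul_sum]
              refine Finset.sum_congr rfl fun p _ => ?_
              rw [Finset.mul_sum]
              exact Finset.sum_congr rfl fun q _ => by ring
      calc variance (S g) P = ∫ ω, S g ω ^ 2 ∂P := hvar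
        _ ≤ C4 * (A g * A g) := hexp ▸ hbound
        _ ≤ C4 * (M * A g) :=
            mul_le_mul_of_nonneg_left (mul_le_mul_of_nonneg_right hAM hAnn) hC4nn
        _ = C4 * M * A g := by ring
  -- T as sum of independent cluster sums
  have hTsum : T = ∑ g, S g := by
    funext ω
    rw [hT ω, Finset.sum_apply]
    refine Finset.sum_congr rfl fun g _ => ?_
    simp only [hSdef, hcdef, hXdef]
    exact (Fintype.sum_prod_type (f := fun p : I g × I g =>
      w g p.1 * w g p.2 * (ε g p.1 ω * ε g p.2 ω - μ2 g p.1 p.2))).symm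
  have hφmeas : ∀ g, Measurable (fun v : I g → ℝ =>
      ∑ p : I g × I g, c g p * (v p.1 * v p.2 - μ2 g p.1 p.2)) := fun g =>
    Finset.measurable_sum _ fun p _ =>
      (((measurable_pi_apply p.1).mul (measurable_pi_apply p.2)).sub measurable_const).const_mul _
  have hindS : ∀ g h : Fin G, g ≠ h → IndepFun (S g) (S h) P := by
    intro g h hgh
    exact (hind.comp (fun g v => ∑ p : I g × I g, c g p * (v p.1 * v p.2 - μ2 g p.1 p.2))
      hφmeas).indepFun hgh
  have hvarT : variance T P = ∑ g, variance (S g) P := by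
    rw [hTsum]
    exact IndepFun.variance_sum (fun g _ => hS2 g) fun g _ h _ hgh => hindS g h hgh
  have hTmean : ∫ ω, T ω ∂P = 0 := by
    rw [hTsum]
    simp only [Finset.sum_apply]
    rw [integral_finset_sum _ fun g _ => (hS2 g).integrable one_le_two]
    simp [hSmean]
  refine ⟨hTmean, ?_⟩
  have htot : (∑ g, ∑ i, ∑ j, |w g i * w g j|) = ∑ g, A g :=
    Finset.sum_congr rfl fun g _ => by
      simp only [hAdef, hcdef]
      exact (Fintype.sum_prod_type (f := fun p : I g × I g => |w g p.1 * w g p.2|)).symm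
  rw [hvarT, htot]
  calc ∑ g, variance (S g) P ≤ ∑ g, C4 * M * A g := Finset.sum_le_sum fun g _ => hSvar g
    _ = C4 * M * ∑ g, A g := by rw [Finset.mul_sum]
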